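/- arXiv:math/9912072 — 3 statements merged into one kernel-verified Lean document; each statement's English description precedes it below -/
import Mathlib

section
/- Let V = V₁ ⊕ ⋯ ⊕ V_t be a direct sum of R-modules, and for each j let m_j : V → V be an R-linear automorphism with the property that m_j(v) - v ∈ V_j for all v ∈ V. Then for each k, the composition p_k ∘ m_k equals p_k ∘ (m_t ∘ ⋯ ∘ m₁) ∘ (m_{k-1} ∘ ⋯ ∘ m₁)⁻¹, where p_k : V → V_k is the projection onto the k-th summand. -/
def compUpTo {R : Type*} [CommRing R] {t : ℕ} {V : Fin t → Type*}
    [∀ i, AddCommGroup (V i)] [∀ i, Module R (V i)]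
    (m : Fin t → ((∀ i, V i) ≃ₗ[R] (∀ i, V i))) : ℕ → ((∀ i, V i) ≃ₗ[R] (∀ i, V i))
  | 0 => LinearEquiv.refl R _
  | k + 1 => if h : k < t then (compUpTo m k).trans (m ⟨k, h⟩) else compUpTo m k

/-- p_k ∘ m_k = p_k ∘ (m_t ∘ ⋯ ∘ m₁) ∘ (m_{k-1} ∘ ⋯ ∘ m₁)⁻¹. -/
theorem stmt1 {R : Type*} [CommRing R] {t : ℕ} {V : Fin t → Type*}
    [∀ i, AddCommGroup (V i)] [∀ i, Module R (V i)]
    (m : Fin t → ((∀ i, V i) ≃ₗ[R] (∀ i, V i)))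
    (hm : ∀ j : Fin t, ∀ v : ∀ i, V i, ∀ i, i ≠ j → (m j v - v) i = 0)
    (k : Fin t) :
    ∀ v : ∀ i, V i, (m k v) k = (compUpTo m t ((compUpTo m k.val).symm v)) k := by
  intro v
  set w := (compUpTo m k.val).symm v with hw
  have hv : compUpTo m k.val w = v := (compUpTo m k.val).apply_symm_apply v
  have step : ∀ (j : Fin t) (x : ∀ i, V i), j ≠ k → (m j x) k = x k := by
    intro j x hj
    have h := hm j x k hj.symm
    rw [Pi.sub_apply, sub_eq_zero] at h
    exact h
  have key : ∀ n, k.val + 1 ≤ n → (compUpTo m n w) k = (m k (compUpTo m k.val w)) k := by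
    intro n hn
    induction n with
    | zero => omega
    | succ n ih =>
      rcases Nat.lt_or_ge (k.val + 1) (n + 1) with h | h
      · have hn' : k.val + 1 ≤ n := by omega
        by_cases ht : n < t
        · rw [show compUpTo m (n + 1) = (compUpTo m n).trans (m ⟨n, ht⟩) from by
            simp [compUpTo, ht]]
          rw [LinearEquiv.trans_apply,
            step ⟨n, ht⟩ _ (by intro hh; apply_fun Fin.val at hh; simp at hh; omega)]
          exact ih hn'
        · rw [show compUpTo m (n + 1) = compUpTo m n from by simp [compUpTo, ht]]
          exact ih hn'
      · have hnk : n = k.val := by omega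
        subst hnk
        rw [show compUpTo m (k.val + 1) = (compUpTo m k.val).trans (m ⟨k.val, k.isLt⟩) from by
          simp [compUpTo, k.isLt]]
        simp [LinearEquiv.trans_apply]
  rw [key t k.isLt, hv]
end

section
/- Let V = V₁ ⊕ ⋯ ⊕ V_t be a direct sum of R-modules, and for each j let m_j : V → V be an R-linear automorphism with m_j(v) - v ∈ V_j for all v. If m_j' is another such family (m_j'(v) - v ∈ V_j for all v) and m_t ∘ ⋯ ∘ m₁ = m_t' ∘ ⋯ ∘ m₁', then m_j = m_j' for all j. -/
lemma compUpTo_apply_of_le {R : Type*} [CommRing R] {t : ℕ} {V : Fin t → Type*}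
    [∀ i, AddCommGroup (V i)] [∀ i, Module R (V i)]
    (m : Fin t → ((∀ i, V i) ≃ₗ[R] (∀ i, V i)))
    (hm : ∀ j : Fin t, ∀ v : ∀ i, V i, ∀ i, i ≠ j → (m j v - v) i = 0)
    (k : ℕ) (v : ∀ i, V i) (i : Fin t) (hi : k ≤ i.val) :
    compUpTo m k v i = v i := by
  induction k with
  | zero => rfl
  | succ k ih =>
    have hk : k < t := lt_trans (Nat.lt_of_succ_le hi) i.isLt
    show (compUpTo m (k+1)) v i = v i
    rw [compUpTo, dif_pos hk]
    simp only [LinearEquiv.trans_apply]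
    have hne : i ≠ ⟨k, hk⟩ := by rintro rfl; simp at hi
    have h1 := hm ⟨k, hk⟩ (compUpTo m k v) i hne
    rw [Pi.sub_apply, sub_eq_zero] at h1
    rw [h1]
    exact ih (by omega)

lemma step_lemma {R : Type*} [CommRing R] {t : ℕ} {V : Fin t → Type*}
    [∀ i, AddCommGroup (V i)] [∀ i, Module R (V i)]
    (m m' : Fin t → ((∀ i, V i) ≃ₗ[R] (∀ i, V i)))
    (hm : ∀ j : Fin t, ∀ v : ∀ i, V i, ∀ i, i ≠ j → (m j v - v) i = 0)
    (hm' : ∀ j : Fin t, ∀ v : ∀ i, V i, ∀ i, i ≠ j → (m' j v - v) i = 0)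
    (k : ℕ) (hk : k < t) (h : compUpTo m (k+1) = compUpTo m' (k+1)) :
    compUpTo m k = compUpTo m' k ∧ m ⟨k, hk⟩ = m' ⟨k, hk⟩ := by
  rw [compUpTo, compUpTo, dif_pos hk, dif_pos hk] at h
  have hv : ∀ v, m ⟨k, hk⟩ (compUpTo m k v) = m' ⟨k, hk⟩ (compUpTo m' k v) := by
    intro v
    have := congrArg (fun f => f v) (congrArg (fun (e : (∀ i, V i) ≃ₗ[R] (∀ i, V i)) => (e : (∀ i, V i) → (∀ i, V i))) h)
    simpa [LinearEquiv.trans_apply] using this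
  have hP : compUpTo m k = compUpTo m' k := by
    apply LinearEquiv.toLinearMap_injective
    apply LinearMap.ext
    intro v
    funext i
    by_cases hik : i = ⟨k, hk⟩
    · subst hik
      show compUpTo m k v _ = compUpTo m' k v _
      rw [compUpTo_apply_of_le m hm k v ⟨k, hk⟩ le_rfl,
          compUpTo_apply_of_le m' hm' k v ⟨k, hk⟩ le_rfl]
    · have h1 := hm ⟨k, hk⟩ (compUpTo m k v) i hik
      have h2 := hm' ⟨k, hk⟩ (compUpTo m' k v) i hik
      rw [Pi.sub_apply, sub_eq_zero] at h1 h2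
      show compUpTo m k v i = compUpTo m' k v i
      rw [← h1, ← h2, hv v]
  refine ⟨hP, ?_⟩
  apply LinearEquiv.toLinearMap_injective
  apply LinearMap.ext
  intro w
  have := hv ((compUpTo m' k).symm w)
  rw [hP] at this
  simp only [LinearEquiv.apply_symm_apply] at this
  exact this

/-- The product m_t ∘ ⋯ ∘ m₁ together with the decomposition determines each factor. -/
theorem stmt2 {R : Type*} [CommRing R] {t : ℕ} {V : Fin t → Type*}
    [∀ i, AddCommGroup (V i)] [∀ i, Module R (V i)]
    (m m' : Fin t → ((∀ i, V i) ≃ₗ[R] (∀ i, V i)))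
    (hm : ∀ j : Fin t, ∀ v : ∀ i, V i, ∀ i, i ≠ j → (m j v - v) i = 0)
    (hm' : ∀ j : Fin t, ∀ v : ∀ i, V i, ∀ i, i ≠ j → (m' j v - v) i = 0)
    (h : compUpTo m t = compUpTo m' t) :
    ∀ j, m j = m' j := by
  have key : ∀ d : ℕ, compUpTo m (t - d) = compUpTo m' (t - d) := by
    intro d
    induction d with
    | zero => simpa using h
    | succ d ih =>
      rcases Nat.eq_zero_or_pos (t - d) with h0 | h0
      · have : t - (d + 1) = 0 := by omega
        rw [this]; rw [h0] at ih; exact ih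
      · have e : t - d = (t - (d + 1)) + 1 := by omega
        have hk : t - (d + 1) < t := by omega
        rw [e] at ih
        exact (step_lemma m m' hm hm' _ hk ih).1
  intro j
  have hj1 : t - (t - (j.val + 1)) = j.val + 1 := by omega
  have := key (t - (j.val + 1))
  rw [hj1] at this
  have := (step_lemma m m' hm hm' j.val j.isLt this).2
  simpa using this
end

section
/- Let V = V₁ ⊕ ⋯ ⊕ V_t be a direct sum of R-modules, and for each j let m_j : V → V be an R-linear automorphism with m_j(v) - v ∈ V_j for all v. If m_t ∘ ⋯ ∘ m₁ = id, then m_j = id for all j. -/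
/-- Trivial monodromy at infinity implies every monodromy operator is trivial. -/
theorem stmt3 {R : Type*} [CommRing R] {t : ℕ} {V : Fin t → Type*}
    [∀ i, AddCommGroup (V i)] [∀ i, Module R (V i)]
    (m : Fin t → ((∀ i, V i) ≃ₗ[R] (∀ i, V i)))
    (hm : ∀ j : Fin t, ∀ v : ∀ i, V i, ∀ i, i ≠ j → (m j v - v) i = 0)
    (h : compUpTo m t = LinearEquiv.refl R (∀ i, V i)) :
    ∀ j, m j = LinearEquiv.refl R (∀ i, V i) := by
  have key : ∀ (j : Fin t) (u : ∀ i, V i) (i : Fin t), i ≠ j → (m j u) i = u i := by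
    intro j u i hij
    have := hm j u i hij
    simpa [sub_eq_zero] using this
  intro j
  -- Lemma A: component j is untouched for n ≤ j
  have A : ∀ n, n ≤ j.val → ∀ v, (compUpTo m n v) j = v j := by
    intro n hn
    induction n with
    | zero => intro v; rfl
    | succ k ih =>
      intro v
      have hk : k < t := lt_of_lt_of_le (Nat.lt_of_succ_le hn) j.isLt.le
      have hne : j ≠ (⟨k, hk⟩ : Fin t) := by
        intro hjk
        have : j.val = k := by rw [hjk]
        omega
      simp only [compUpTo, dif_pos hk, LinearEquiv.trans_apply]
      rw [key _ _ _ hne, ih (Nat.le_of_succ_le hn)]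
  -- Lemma B: component j is untouched after step j+1
  have B : ∀ n, j.val < n → n ≤ t → ∀ v,
      (compUpTo m n v) j = (m j (compUpTo m j.val v)) j := by
    intro n
    induction n with
    | zero => omega
    | succ k ih =>
      intro h1 h2 v
      have hk : k < t := h2
      simp only [compUpTo, dif_pos hk, LinearEquiv.trans_apply]
      rcases Nat.lt_or_ge j.val k with hlt | hge
      · have hne : j ≠ (⟨k, hk⟩ : Fin t) := by
          intro hjk
          have : j.val = k := by rw [hjk]
          omega
        rw [key _ _ _ hne, ih hlt (le_of_lt h2)]
      · have hjk : j.val = k := by omega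
        subst hjk
        rfl
  ext u i
  simp only [LinearEquiv.refl_apply]
  rcases eq_or_ne i j with rfl | hne
  · set v := (compUpTo m i.val).symm u with hv
    have hvu : compUpTo m i.val v = u := (compUpTo m i.val).apply_symm_apply u
    have h1 : (compUpTo m t v) i = v i := by rw [h]; rfl
    have h2 : (compUpTo m t v) i = (m i u) i := by
      rw [B t i.isLt le_rfl v, hvu]
    have h3 : v i = u i := by
      rw [← hvu, A i.val le_rfl]
    rw [← h2, h1, h3]
  · exact key j u i hne
end
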